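/- Let L be symmetric PSD with unit eigenvectors u₁,...,u_k (eigenvalues 0 < λ₁ ≤ ... ≤ λ_k), and suppose L_c and L are (U_i, ε_i)-similar for each i ≤ k (i.e., ‖u_i − Πu_i‖_L ≤ ε_i‖u_i‖_L with Π = P^+P). Then the single-level n-means cost of the corresponding partition satisfies Σ_{i≤k} ε_i ≥ ‖(I − Π)U_k‖²_F ≥ K_n(U_k, 𝒫*), the optimal n-means cost of the rows of U_k. -/

import Mathlib

open Matrix Finset

/-- Laplacian-consistent coarsening matrix of a partition given by `φ`. -/
noncomputable def cP {N n : ℕ} (φ : Fin N → Fin n) : Matrix (Fin n) (Fin N) ℝ :=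
  Matrix.of fun r i =>
    if φ i = r then ((Finset.univ.filter fun j => φ j = r).card : ℝ)⁻¹ else 0

/-- Its pseudoinverse: `P⁺ i r = 1` if `φ i = r`, else `0`. -/
def cPp {N n : ℕ} (φ : Fin N → Fin n) : Matrix (Fin N) (Fin n) ℝ :=
  Matrix.of fun i r => if φ i = r then (1 : ℝ) else 0

/-- The semi-norm `‖x‖_L = √(xᵀ L x)`. -/
noncomputable def lnorm {N : ℕ} (L : Matrix (Fin N) (Fin N) ℝ) (x : Fin N → ℝ) : ℝ :=
  Real.sqrt (x ⬝ᵥ (L *ᵥ x))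

/-- The `n`-means cost of assigning the rows of `U` to clusters via `ψ`. -/
noncomputable def kcost {N n k : ℕ} (U : Matrix (Fin N) (Fin k) ℝ)
    (ψ : Fin N → Fin n) : ℝ :=
  ∑ r : Fin n, ∑ i ∈ Finset.univ.filter fun i => ψ i = r, ∑ a,
    (U i a - (∑ j ∈ Finset.univ.filter fun j => ψ j = r, U j a) /
      ((Finset.univ.filter fun j => ψ j = r).card : ℝ)) ^ 2

lemma cPi_apply {N n : ℕ} (φ : Fin N → Fin n) (i j : Fin N) :
    (cPp φ * cP φ) i j =
      if φ i = φ j then ((Finset.univ.filter fun l => φ l = φ i).card : ℝ)⁻¹ else 0 := by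
  classical
  simp only [Matrix.mul_apply, cPp, cP, Matrix.of_apply]
  rw [Finset.sum_eq_single (φ i)]
  · simp [eq_comm]
  · intro b _ hb; simp [Ne.symm hb]
  · simp

lemma cPi_mulVec {N n : ℕ} (φ : Fin N → Fin n) (x : Fin N → ℝ) (i : Fin N) :
    ((cPp φ * cP φ) *ᵥ x) i =
      (∑ j ∈ Finset.univ.filter fun j => φ j = φ i, x j) *
        ((Finset.univ.filter fun j => φ j = φ i).card : ℝ)⁻¹ := by
  classical
  simp only [Matrix.mulVec, dotProduct, cPi_apply, ite_mul, zero_mul]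
  rw [← Finset.sum_filter, Finset.sum_mul]
  refine Finset.sum_congr (by ext j; simp [eq_comm]) fun j hj => mul_comm _ _

lemma factA {N n : ℕ} (φ : Fin N → Fin n) (hφ : Function.Surjective φ) (x : Fin N → ℝ) :
    x ⬝ᵥ ((cPp φ * cP φ) *ᵥ x) = ((cPp φ * cP φ) *ᵥ x) ⬝ᵥ ((cPp φ * cP φ) *ᵥ x) := by
  classical
  simp only [dotProduct, cPi_mulVec]
  rw [← Finset.sum_fiberwise Finset.univ φ (fun i => x i *
      ((∑ j ∈ Finset.univ.filter fun j => φ j = φ i, x j) *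
        ((Finset.univ.filter fun j => φ j = φ i).card : ℝ)⁻¹)),
    ← Finset.sum_fiberwise Finset.univ φ (fun i =>
      ((∑ j ∈ Finset.univ.filter fun j => φ j = φ i, x j) *
        ((Finset.univ.filter fun j => φ j = φ i).card : ℝ)⁻¹) *
      ((∑ j ∈ Finset.univ.filter fun j => φ j = φ i, x j) *
        ((Finset.univ.filter fun j => φ j = φ i).card : ℝ)⁻¹))]
  refine Finset.sum_congr rfl fun r _ => ?_
  have h1 : ∀ f : Fin N → ℝ,
      (∑ i ∈ Finset.univ.filter fun j => φ j = r, f i) =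
      ∑ i ∈ Finset.univ.filter fun j => φ j = r, f i := fun _ => rfl
  have hrw : ∀ i ∈ Finset.univ.filter fun j => φ j = r, φ i = r :=
    fun i hi => (Finset.mem_filter.1 hi).2
  have hc : ((Finset.univ.filter fun j => φ j = r).card : ℝ) ≠ 0 := by
    obtain ⟨i, hi⟩ := hφ r
    have : 0 < (Finset.univ.filter fun j => φ j = r).card := Finset.card_pos.2 ⟨i, by simp [hi]⟩
    positivity
  set S := ∑ j ∈ Finset.univ.filter fun j => φ j = r, x j with hS
  set c := ((Finset.univ.filter fun j => φ j = r).card : ℝ) with hcdef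
  calc ∑ i ∈ Finset.univ.filter fun j => φ j = r, x i *
        ((∑ j ∈ Finset.univ.filter fun j => φ j = φ i, x j) *
          ((Finset.univ.filter fun j => φ j = φ i).card : ℝ)⁻¹)
      = ∑ i ∈ Finset.univ.filter fun j => φ j = r, x i * (S * c⁻¹) := by
        refine Finset.sum_congr rfl fun i hi => ?_; rw [hrw i hi]
    _ = S * (S * c⁻¹) := by rw [← Finset.sum_mul]
    _ = ∑ i ∈ Finset.univ.filter fun j => φ j = r, (S * c⁻¹) * (S * c⁻¹) := by
        rw [Finset.sum_const, nsmul_eq_mul, ← hcdef]; field_simp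
    _ = _ := by
        refine Finset.sum_congr rfl fun i hi => ?_; rw [hrw i hi]

lemma factB {N n : ℕ} (φ : Fin N → Fin n) (hφ : Function.Surjective φ) (x : Fin N → ℝ) :
    (x - (cPp φ * cP φ) *ᵥ x) ⬝ᵥ x = (x - (cPp φ * cP φ) *ᵥ x) ⬝ᵥ (x - (cPp φ * cP φ) *ᵥ x) := by
  have h := factA φ hφ x
  have hc := dotProduct_comm ((cPp φ * cP φ) *ᵥ x) x
  simp only [sub_dotProduct, dotProduct_sub]
  linarith

lemma psd_cs {N : ℕ} {L : Matrix (Fin N) (Fin N) ℝ} (hL : L.PosSemidef) (x y : Fin N → ℝ) :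
    (x ⬝ᵥ (L *ᵥ y))^2 ≤ (x ⬝ᵥ (L *ᵥ x)) * (y ⬝ᵥ (L *ᵥ y)) := by
  classical
  have hsym : Lᵀ = L := by
    have h2 := hL.1
    simpa [Matrix.IsHermitian] using h2
  have hc' : y ⬝ᵥ (L *ᵥ x) = x ⬝ᵥ (L *ᵥ y) := by
    rw [dotProduct_mulVec, ← mulVec_transpose, hsym, dotProduct_comm]
  have hq : ∀ t : ℝ, 0 ≤ (y ⬝ᵥ (L *ᵥ y)) * (t * t) + 2 * (x ⬝ᵥ (L *ᵥ y)) * t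
      + x ⬝ᵥ (L *ᵥ x) := by
    intro t
    have h := hL.dotProduct_mulVec_nonneg (x + t • y)
    simp only [star_trivial, mulVec_add, mulVec_smul, add_dotProduct, dotProduct_add,
      smul_dotProduct, dotProduct_smul, smul_eq_mul, hc'] at h
    nlinarith [h]
  have hd := discrim_le_zero hq
  unfold discrim at hd
  nlinarith [hd]

/-- Lower bound on the restricted-spectral-approximation constants of a single-level
Laplacian-consistent coarsening: `Σ_{i≤k} ε_i ≥ ‖(I − Π)U_k‖²_F ≥ K_n(U_k, 𝒫*)`,
the optimal `n`-means cost of the rows of `U_k`. -/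
theorem epsilon_lower_bound {N n k : ℕ} (hn : 0 < n)
    (L : Matrix (Fin N) (Fin N) ℝ) (hL : L.PosSemidef)
    (u : Fin k → Fin N → ℝ) (lam : Fin k → ℝ)
    (heig : ∀ i, L *ᵥ u i = lam i • u i)
    (horth : ∀ i j, u i ⬝ᵥ u j = if i = j then (1 : ℝ) else 0)
    (hpos : ∀ i, 0 < lam i) (hmono : Monotone lam)
    (φ : Fin N → Fin n) (hφ : Function.Surjective φ)
    (ε : Fin k → ℝ)
    (hsim : ∀ i : Fin k, ∀ x : Fin N → ℝ,
      x ∈ Submodule.span ℝ (u '' {j | j ≤ i}) →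
      lnorm L (x - (cPp φ * cP φ) *ᵥ x) ≤ ε i * lnorm L x) :
    (∑ i, ε i) ≥
      (∑ i, ∑ a, ((Matrix.of (fun i a => u a i) -
        (cPp φ * cP φ) * Matrix.of (fun i a => u a i)) i a) ^ 2) ∧
    (∑ i, ∑ a, ((Matrix.of (fun i a => u a i) -
        (cPp φ * cP φ) * Matrix.of (fun i a => u a i)) i a) ^ 2) ≥
      ⨅ ψ : Fin N → Fin n, kcost (Matrix.of fun i a => u a i) ψ := by
  classical
  have hbound : ∀ i : Fin k,
      (u i - (cPp φ * cP φ) *ᵥ u i) ⬝ᵥ (u i - (cPp φ * cP φ) *ᵥ u i) ≤ ε i := by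
    intro i
    set y := u i - (cPp φ * cP φ) *ᵥ u i with hy
    have hxmem : u i ∈ Submodule.span ℝ (u '' {j | j ≤ i}) :=
      Submodule.subset_span ⟨i, le_refl i, rfl⟩
    have hsim' := hsim i (u i) hxmem
    have hnu : u i ⬝ᵥ (L *ᵥ u i) = lam i := by
      rw [heig]; simp [dotProduct_smul, smul_eq_mul, horth i i]
    have ht : y ⬝ᵥ u i = y ⬝ᵥ y := factB φ hφ (u i)
    have hq0 : 0 ≤ y ⬝ᵥ (L *ᵥ y) := by simpa using hL.dotProduct_mulVec_nonneg y
    have htnn : 0 ≤ y ⬝ᵥ y := by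
      simp only [dotProduct]
      exact Finset.sum_nonneg fun j _ => mul_self_nonneg _
    have hcs := psd_cs hL y (u i)
    have hyLu : y ⬝ᵥ (L *ᵥ u i) = lam i * (y ⬝ᵥ y) := by
      rw [heig, dotProduct_smul, smul_eq_mul, ht]
    have h1 : Real.sqrt (y ⬝ᵥ (L *ᵥ y)) ≤ ε i * Real.sqrt (lam i) := by
      simpa only [lnorm, hnu] using hsim'
    have hsq : 0 < Real.sqrt (lam i) := Real.sqrt_pos.2 (hpos i)
    have hε : 0 ≤ ε i := by
      by_contra h
      push_neg at h
      nlinarith [Real.sqrt_nonneg (y ⬝ᵥ (L *ᵥ y))]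
    have hq : y ⬝ᵥ (L *ᵥ y) ≤ ε i ^ 2 * lam i := by
      have h2 : (Real.sqrt (y ⬝ᵥ (L *ᵥ y))) ^ 2 ≤ (ε i * Real.sqrt (lam i)) ^ 2 :=
        pow_le_pow_left₀ (Real.sqrt_nonneg _) h1 2
      rw [Real.sq_sqrt hq0, mul_pow, Real.sq_sqrt (hpos i).le] at h2
      exact h2
    have ht2 : (y ⬝ᵥ y) ^ 2 ≤ ε i ^ 2 := by
      have hl2 : lam i ^ 2 * (y ⬝ᵥ y) ^ 2 ≤ ε i ^ 2 * lam i ^ 2 := by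
        have hcs' := hcs
        rw [hyLu, hnu] at hcs'
        nlinarith [hcs', mul_le_mul_of_nonneg_right hq (hpos i).le]
      have hp : (0:ℝ) < lam i ^ 2 := pow_pos (hpos i) 2
      exact le_of_mul_le_mul_left (by linarith) hp
    calc y ⬝ᵥ y = Real.sqrt ((y ⬝ᵥ y) ^ 2) := (Real.sqrt_sq htnn).symm
      _ ≤ Real.sqrt (ε i ^ 2) := Real.sqrt_le_sqrt ht2
      _ = ε i := Real.sqrt_sq hε
  have hentry : ∀ (i : Fin N) (a : Fin k),
      (Matrix.of (fun i a => u a i) -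
        (cPp φ * cP φ) * Matrix.of (fun i a => u a i)) i a
      = (u a - (cPp φ * cP φ) *ᵥ u a) i := by
    intro i a
    simp [Matrix.sub_apply, Matrix.mul_apply, Matrix.mulVec, dotProduct]
  have hds : (∑ i, ∑ a, ((Matrix.of (fun i a => u a i) -
        (cPp φ * cP φ) * Matrix.of (fun i a => u a i)) i a) ^ 2)
      = ∑ i, ∑ a, ((u a - (cPp φ * cP φ) *ᵥ u a) i) ^ 2 := by
    simp only [hentry]
  have hkc : kcost (Matrix.of fun i a => u a i) φ
      = ∑ i, ∑ a, ((u a - (cPp φ * cP φ) *ᵥ u a) i) ^ 2 := by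
    rw [kcost, ← Finset.sum_fiberwise Finset.univ φ
      (fun i => ∑ a, ((u a - (cPp φ * cP φ) *ᵥ u a) i) ^ 2)]
    refine Finset.sum_congr rfl fun r _ => Finset.sum_congr rfl fun i hi =>
      Finset.sum_congr rfl fun a _ => ?_
    have hir : φ i = r := (Finset.mem_filter.1 hi).2
    simp only [Matrix.of_apply, Pi.sub_apply, div_eq_mul_inv]
    rw [cPi_mulVec φ (u a) i, hir]
  constructor
  · rw [ge_iff_le, hds, Finset.sum_comm]
    refine Finset.sum_le_sum fun a _ => ?_
    calc ∑ i, ((u a - (cPp φ * cP φ) *ᵥ u a) i) ^ 2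
        = (u a - (cPp φ * cP φ) *ᵥ u a) ⬝ᵥ (u a - (cPp φ * cP φ) *ᵥ u a) := by
          simp [dotProduct, pow_two]
      _ ≤ ε a := hbound a
  · rw [ge_iff_le, hds]
    have hb : BddBelow (Set.range fun ψ : Fin N → Fin n =>
        kcost (Matrix.of fun i a => u a i) ψ) := by
      refine ⟨0, ?_⟩
      rintro z ⟨ψ, rfl⟩
      refine Finset.sum_nonneg fun r _ => Finset.sum_nonneg fun i _ =>
        Finset.sum_nonneg fun a _ => sq_nonneg _
    exact (ciInf_le hb φ).trans (le_of_eq hkc)
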